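/- Let P̃ be an irreducible reversible stochastic matrix with stationary distribution π̃, and Q a nonnegative diagonal matrix with π̃ Q 𝟙 > 0 such that P̃ − εQ is substochastic and I − P̃ + εQ is invertible for small ε > 0. Then ε · [I − P̃ + εQ]^{−1} → 𝟙π̃ / (π̃ Q 𝟙) as ε → 0+; in particular ε · ν[I − P̃ + εQ]^{−1}𝟙 → 1/(π̃ Q 𝟙) for any probability vector ν. -/

import Mathlib

open Finset Filter Matrix

lemma aux_const {n : ℕ} (hn : 0 < n) (P : Matrix (Fin n) (Fin n) ℝ)
    (hP0 : ∀ i j, 0 ≤ P i j) (hP1 : ∀ i, ∑ j, P i j = 1)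
    (hirr : ∀ i j, ∃ t : ℕ, 0 < (P ^ t) i j)
    (x : Fin n → ℝ) (hx : P *ᵥ x = x) : ∀ j i, x j = x i := by
  have hpow0 : ∀ t i j, 0 ≤ (P ^ t) i j := by
    intro t
    induction t with
    | zero => intro i j; by_cases h : i = j <;> simp [pow_zero, Matrix.one_apply, h]
    | succ t ih =>
      intro i j
      rw [pow_succ, Matrix.mul_apply]
      exact Finset.sum_nonneg fun k _ => mul_nonneg (ih i k) (hP0 k j)
  have hpow1 : ∀ t i, ∑ j, (P ^ t) i j = 1 := by
    intro t
    induction t with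
    | zero => intro i; simp [pow_zero, Matrix.one_apply]
    | succ t ih =>
      intro i
      simp only [pow_succ, Matrix.mul_apply]
      rw [Finset.sum_comm]
      calc ∑ k, ∑ j, (P ^ t) i k * P k j = ∑ k, (P ^ t) i k * ∑ j, P k j := by
            simp [Finset.mul_sum]
        _ = 1 := by simp [hP1, ih i]
  have hpowx : ∀ t, (P ^ t) *ᵥ x = x := by
    intro t
    induction t with
    | zero => simp [pow_zero, Matrix.one_mulVec]
    | succ t ih => rw [pow_succ, ← Matrix.mulVec_mulVec, hx, ih]
  have : Nonempty (Fin n) := ⟨⟨0, hn⟩⟩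
  obtain ⟨i₀, -, hmax⟩ := Finset.exists_max_image Finset.univ x ⟨⟨0, hn⟩, Finset.mem_univ _⟩
  have key : ∀ j, x j = x i₀ := by
    intro j
    obtain ⟨t, ht⟩ := hirr i₀ j
    have hxe : ∑ k, (P ^ t) i₀ k * x k = x i₀ := by
      have := congrFun (hpowx t) i₀
      simpa [Matrix.mulVec, dotProduct] using this
    have hsum : ∑ k, (P ^ t) i₀ k * (x i₀ - x k) = 0 := by
      simp only [mul_sub, Finset.sum_sub_distrib, hxe, ← Finset.sum_mul, hpow1 t i₀, one_mul,
        sub_self]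
    have hterm := (Finset.sum_eq_zero_iff_of_nonneg (fun k _ =>
      mul_nonneg (hpow0 t i₀ k) (sub_nonneg.2 (hmax k (Finset.mem_univ k))))).1 hsum j
      (Finset.mem_univ j)
    have := mul_eq_zero.1 hterm
    rcases this with h | h
    · exact absurd h (ne_of_gt ht)
    · linarith [sub_eq_zero.1 h]
  intro j i; rw [key j, key i]
lemma aux_adj {n : ℕ} (pt : Fin n → ℝ) (hpt1 : ∑ i, pt i = 1) :
    Matrix.adjugate (1 - Matrix.of (fun _ j : Fin n => pt j))
      = Matrix.of (fun _ j : Fin n => pt j) := by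
  set M : Matrix (Fin n) (Fin n) ℝ := Matrix.of (fun _ j : Fin n => pt j) with hM
  have hMM : M * M = M := by
    ext i j
    simp only [Matrix.mul_apply, hM, Matrix.of_apply]
    rw [← Finset.sum_mul, hpt1, one_mul]
  -- D t = 1 - M + t • M
  set D : ℝ → Matrix (Fin n) (Fin n) ℝ := fun t => 1 - M + t • M with hD
  have hdet : ∀ t, (D t).det = t := by
    intro t
    have : D t = 1 + Matrix.replicateCol Unit (fun _ => t - 1) * Matrix.replicateRow Unit pt := by
      ext i j
      simp [hD, hM, Matrix.mul_apply, Matrix.replicateCol, Matrix.replicateRow, Matrix.one_apply]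
      ring
    rw [this, Matrix.det_one_add_replicateCol_mul_replicateRow]
    simp [dotProduct, ← Finset.sum_mul, hpt1]
  have hinv : ∀ t : ℝ, t ≠ 0 → D t * (1 - ((t - 1) / t) • M) = 1 := by
    intro t ht
    have hDt : D t = 1 + (t - 1) • M := by
      simp only [hD]; rw [sub_smul, one_smul]; abel
    have e1 : ((t-1) • M) * (((t - 1) / t) • M) = ((t-1) * ((t-1)/t)) • M := by
      rw [Matrix.smul_mul, Matrix.mul_smul, hMM, smul_smul]
    have coeff : (((t-1) - (t-1)/t) - (t-1) * ((t-1)/t) : ℝ) = 0 := by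
      field_simp; ring
    rw [hDt, Matrix.add_mul, Matrix.one_mul, Matrix.mul_sub, Matrix.mul_one, e1]
    have expand : ((((t-1) - (t-1)/t) - (t-1) * ((t-1)/t)) : ℝ) • M
        = (t-1) • M - ((t-1)/t) • M - ((t-1) * ((t-1)/t)) • M := by
      rw [sub_smul, sub_smul]
    rw [coeff, zero_smul] at expand
    have habel : (1 : Matrix (Fin n) (Fin n) ℝ) - ((t-1)/t) • M + ((t-1) • M - ((t-1) * ((t-1)/t)) • M)
        = 1 + ((t-1) • M - ((t-1)/t) • M - ((t-1) * ((t-1)/t)) • M) := by abel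
    rw [habel, ← expand, add_zero]
  have hadj : ∀ t : ℝ, t ≠ 0 → (D t).adjugate = t • 1 - (t - 1) • M := by
    intro t ht
    have hdu : IsUnit (D t).det := by rw [hdet]; exact (isUnit_iff_ne_zero).2 ht
    have hinv' : (D t)⁻¹ = 1 - ((t - 1) / t) • M := Matrix.inv_eq_right_inv (hinv t ht)
    have := Matrix.inv_def (D t)
    rw [hinv', hdet, Ring.inverse_eq_inv] at this
    have h2 : (t : ℝ) • (1 - ((t - 1) / t) • M) = (t : ℝ) • (t⁻¹ • (D t).adjugate) := by
      rw [this]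
    rw [smul_smul, mul_inv_cancel₀ ht, one_smul] at h2
    rw [← h2, smul_sub, smul_smul]
    congr 2
    field_simp
  -- continuity argument at t = 0
  have hcD : Continuous D := by
    apply Continuous.add continuous_const
    exact continuous_id.smul continuous_const
  have hc1 : Tendsto (fun t => (D t).adjugate) (nhdsWithin 0 {(0:ℝ)}ᶜ)
      (nhds ((D 0).adjugate)) :=
    (hcD.matrix_adjugate.tendsto 0).mono_left nhdsWithin_le_nhds
  have hc2 : Tendsto (fun t : ℝ => t • (1 : Matrix (Fin n) (Fin n) ℝ) - (t - 1) • M)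
      (nhdsWithin 0 {(0:ℝ)}ᶜ)
      (nhds ((0:ℝ) • (1 : Matrix (Fin n) (Fin n) ℝ) - ((0:ℝ) - 1) • M)) := by
    have : Continuous (fun t : ℝ => t • (1 : Matrix (Fin n) (Fin n) ℝ) - (t - 1) • M) := by
      exact (continuous_id.smul continuous_const).sub
        ((continuous_id.sub continuous_const).smul continuous_const)
    exact (this.tendsto 0).mono_left nhdsWithin_le_nhds
  have heq : ∀ᶠ t in nhdsWithin 0 {(0:ℝ)}ᶜ,
      (D t).adjugate = t • (1 : Matrix (Fin n) (Fin n) ℝ) - (t - 1) • M := by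
    filter_upwards [self_mem_nhdsWithin] with t ht
    exact hadj t ht
  have := tendsto_nhds_unique (hc1.congr' heq) hc2
  have hD0 : D 0 = 1 - M := by simp [hD]
  rw [hD0] at this
  rw [this]
  simp
/-- Let `P̃` be an irreducible reversible stochastic matrix with stationary distribution
`π̃`, and `Q` a nonnegative diagonal matrix with `π̃ Q 𝟙 > 0` such that `P̃ - ε Q` is
substochastic and `I - P̃ + ε Q` is invertible for small `ε > 0`.  Then
`ε • [I - P̃ + ε Q]⁻¹ → 𝟙 π̃ / (π̃ Q 𝟙)` as `ε → 0⁺`; in particular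
`ε • ν [I - P̃ + ε Q]⁻¹ 𝟙 → 1 / (π̃ Q 𝟙)` for any probability vector `ν`. -/
theorem stmt_16 (n : ℕ) (hn : 0 < n) (P : Matrix (Fin n) (Fin n) ℝ)
    (hP0 : ∀ i j, 0 ≤ P i j) (hP1 : ∀ i, ∑ j, P i j = 1)
    (hirr : ∀ i j, ∃ t : ℕ, 0 < (P ^ t) i j)
    (pt : Fin n → ℝ) (hpt0 : ∀ i, 0 ≤ pt i) (hpt1 : ∑ i, pt i = 1)
    (hstat : ∀ j, ∑ i, pt i * P i j = pt j)
    (hrev : ∀ i j, pt i * P i j = pt j * P j i)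
    (Q : Matrix (Fin n) (Fin n) ℝ) (hQdiag : ∀ i j, i ≠ j → Q i j = 0)
    (hQ0 : ∀ i, 0 ≤ Q i i)
    (hQpos : 0 < ∑ j, pt j * Q j j)
    (ε₀ : ℝ) (hε₀ : 0 < ε₀)
    (hsub : ∀ ε : ℝ, 0 < ε → ε < ε₀ →
      (∀ i j, 0 ≤ P i j - ε * Q i j) ∧ (∀ i, ∑ j, (P i j - ε * Q i j) ≤ 1) ∧
      IsUnit (1 - P + ε • Q))
    (ν : Fin n → ℝ) (hν0 : ∀ i, 0 ≤ ν i) (hν1 : ∑ i, ν i = 1) :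
    Tendsto (fun ε : ℝ => ε • (1 - P + ε • Q)⁻¹) (nhdsWithin 0 (Set.Ioi 0))
      (nhds ((1 / ∑ j, pt j * Q j j) • Matrix.of fun _ j : Fin n => pt j)) ∧
    Tendsto (fun ε : ℝ =>
        ε * dotProduct ν (Matrix.mulVec (1 - P + ε • Q)⁻¹ fun _ => 1))
      (nhdsWithin 0 (Set.Ioi 0)) (nhds (1 / ∑ j, pt j * Q j j)) := by
  classical
  have hne : Nonempty (Fin n) := ⟨⟨0, hn⟩⟩
  set c := ∑ j, pt j * Q j j with hc
  set M : Matrix (Fin n) (Fin n) ℝ := Matrix.of (fun _ j : Fin n => pt j) with hM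
  set B : Matrix (Fin n) (Fin n) ℝ := 1 - P with hB
  set A : ℝ → Matrix (Fin n) (Fin n) ℝ := fun ε => B + ε • Q with hA
  -- basic identities
  have hone : ∀ j, ∑ i, pt i * (1 : Matrix (Fin n) (Fin n) ℝ) i j = pt j := by
    intro j
    simp [Matrix.one_apply, mul_ite]
  have hptB : pt ᵥ* B = 0 := by
    funext j
    simp only [Matrix.vecMul, dotProduct, hB, Matrix.sub_apply, mul_sub,
      Finset.sum_sub_distrib, Pi.zero_apply]
    rw [hone j, hstat j, sub_self]
  have hrowB : ∀ i, ∑ k, B i k = 0 := by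
    intro i
    simp only [hB, Matrix.sub_apply, Finset.sum_sub_distrib]
    have : ∑ k, (1 : Matrix (Fin n) (Fin n) ℝ) i k = 1 := by simp [Matrix.one_apply]
    rw [this, hP1 i, sub_self]
  have hMM : M * M = M := by
    ext i j
    simp only [Matrix.mul_apply, hM, Matrix.of_apply]
    rw [← Finset.sum_mul, hpt1, one_mul]
  have hMB : M * B = 0 := by
    ext i j
    have := congrFun hptB j
    simpa [Matrix.mul_apply, Matrix.vecMul, dotProduct, hM] using this
  have hBM : B * M = 0 := by
    ext i j
    simp only [Matrix.mul_apply, hM, Matrix.of_apply, Matrix.zero_apply]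
    rw [← Finset.sum_mul, hrowB i, zero_mul]
  set C : Matrix (Fin n) (Fin n) ℝ := B + M with hC
  have hptM : pt ᵥ* M = pt := by
    funext j
    simp only [Matrix.vecMul, dotProduct, hM, Matrix.of_apply]
    rw [← Finset.sum_mul, hpt1, one_mul]
  have hptC : pt ᵥ* C = pt := by
    rw [hC, Matrix.vecMul_add, hptB, hptM, zero_add]
  -- C is invertible
  have hdetC : C.det ≠ 0 := by
    intro hdet0
    obtain ⟨v, hv0, hv⟩ := Matrix.exists_mulVec_eq_zero_iff.2 hdet0
    have hsv : pt ⬝ᵥ v = 0 := by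
      calc pt ⬝ᵥ v = (pt ᵥ* C) ⬝ᵥ v := by rw [hptC]
        _ = pt ⬝ᵥ (C *ᵥ v) := (Matrix.dotProduct_mulVec _ _ _).symm
        _ = 0 := by rw [hv]; simp [dotProduct]
    have hMv : M *ᵥ v = 0 := by
      funext i
      simpa [Matrix.mulVec, dotProduct, hM] using hsv
    have hBv : B *ᵥ v = 0 := by
      have h := hv
      rw [hC, Matrix.add_mulVec, hMv, add_zero] at h
      exact h
    have hPv : P *ᵥ v = v := by
      have h : (1 - P) *ᵥ v = 0 := hBv
      rw [Matrix.sub_mulVec, Matrix.one_mulVec] at h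
      have := sub_eq_zero.1 h
      exact this.symm
    have hconst := aux_const hn P hP0 hP1 hirr v hPv
    apply hv0
    funext j
    have hptv : pt ⬝ᵥ v = v j := by
      simp only [dotProduct]
      calc ∑ i, pt i * v i = ∑ i, pt i * v j := by
            refine Finset.sum_congr rfl fun i _ => ?_
            rw [hconst i j]
        _ = v j := by rw [← Finset.sum_mul, hpt1, one_mul]
    have : v j = 0 := by rw [← hptv, hsv]
    simpa using this
  have hCunit : IsUnit C := (Matrix.isUnit_iff_isUnit_det C).2 (isUnit_iff_ne_zero.2 hdetC)
  have hCCinv : C * C⁻¹ = 1 := Matrix.mul_nonsing_inv C (isUnit_iff_ne_zero.2 hdetC)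
  have hMC : M * C = M := by rw [hC, Matrix.mul_add, hMB, hMM, zero_add]
  have hMCinv : M * C⁻¹ = M := by
    calc M * C⁻¹ = M * C * C⁻¹ := by rw [hMC]
      _ = M * (C * C⁻¹) := by rw [Matrix.mul_assoc]
      _ = M := by rw [hCCinv, Matrix.mul_one]
  have hadjC : C.adjugate = C.det • C⁻¹ := by
    have h := Matrix.inv_def C
    rw [Ring.inverse_eq_inv] at h
    rw [h, smul_smul, mul_inv_cancel₀ hdetC, one_smul]
  have hBCM : B = C * (1 - M) := by
    rw [Matrix.mul_sub, Matrix.mul_one, hC, Matrix.add_mul, hBM, hMM, zero_add]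
    abel
  have hadjB : B.adjugate = C.det • M := by
    rw [hBCM, Matrix.adjugate_mul_distrib, aux_adj pt hpt1, hadjC, Matrix.mul_smul, hMCinv]
  -- the key determinant identity
  set w : Fin n → ℝ := pt ᵥ* Q with hw
  set h : ℝ → ℝ := fun ε => w ᵥ* (A ε).adjugate ⬝ᵥ (fun _ => (1:ℝ)) with hh
  have e2 : ∀ d : ℝ, pt ᵥ* (d • (1 : Matrix (Fin n) (Fin n) ℝ)) ⬝ᵥ (fun _ => (1:ℝ)) = d := by
    intro d
    simp only [Matrix.vecMul, dotProduct, Matrix.smul_apply, Matrix.one_apply,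
      smul_eq_mul, mul_one, mul_ite, mul_zero]
    simp [Finset.sum_ite_eq, ← Finset.sum_mul, hpt1]
  have key : ∀ ε : ℝ, (A ε).det = ε * h ε := by
    intro ε
    have hptA : pt ᵥ* (A ε) = ε • w := by
      rw [hA]
      simp only
      rw [Matrix.vecMul_add, hptB, zero_add]
      funext j
      simp only [Matrix.vecMul, dotProduct, Matrix.smul_apply, smul_eq_mul,
        Pi.smul_apply, hw, Finset.mul_sum]
      refine Finset.sum_congr rfl fun i _ => ?_
      ring
    calc (A ε).det = pt ᵥ* ((A ε) * (A ε).adjugate) ⬝ᵥ (fun _ => (1:ℝ)) := by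
          rw [Matrix.mul_adjugate, e2]
      _ = ((pt ᵥ* (A ε)) ᵥ* (A ε).adjugate) ⬝ᵥ (fun _ => (1:ℝ)) := by
          rw [Matrix.vecMul_vecMul]
      _ = (ε • (w ᵥ* (A ε).adjugate)) ⬝ᵥ (fun _ => (1:ℝ)) := by
          rw [hptA, Matrix.smul_vecMul]
      _ = ε * h ε := by rw [smul_dotProduct, smul_eq_mul, hh]
  -- continuity
  have hcA : Continuous A := continuous_const.add (continuous_id.smul continuous_const)
  have hcadj : Continuous fun ε => (A ε).adjugate := hcA.matrix_adjugate
  have hconth : Continuous h :=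
    (continuous_const.matrix_vecMul hcadj).dotProduct continuous_const
  -- value at 0
  have hA0 : A 0 = B := by rw [hA]; simp
  have hwj : w = fun j => pt j * Q j j := by
    funext j
    rw [hw]
    simp only [Matrix.vecMul, dotProduct]
    rw [Finset.sum_eq_single j]
    · intro i _ hij
      rw [hQdiag i j hij, mul_zero]
    · intro hj; exact absurd (Finset.mem_univ j) hj
  have h0eq : h 0 = C.det * c := by
    rw [hh]
    simp only [hA0, hadjB]
    simp only [Matrix.vecMul, dotProduct, Matrix.smul_apply, hM, Matrix.of_apply,
      smul_eq_mul, mul_one]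
    rw [hwj, hc]
    simp_rw [← Finset.sum_mul]
    simp only [← Finset.mul_sum]
    rw [hpt1]
    ring
  have h0ne : h 0 ≠ 0 := by
    rw [h0eq]
    exact mul_ne_zero hdetC (ne_of_gt hQpos)
  -- limit of the normalized family
  have hF : Tendsto (fun ε => (h ε)⁻¹ • (A ε).adjugate) (nhds (0:ℝ))
      (nhds ((h 0)⁻¹ • (A 0).adjugate)) :=
    ((hconth.tendsto 0).inv₀ h0ne).smul (hcadj.tendsto 0)
  have hval : (h 0)⁻¹ • (A 0).adjugate = (1 / c) • M := by
    rw [hA0, hadjB, h0eq, smul_smul]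
    congr 1
    field_simp
  rw [hval] at hF
  have hev : ∀ᶠ ε in nhdsWithin (0:ℝ) (Set.Ioi 0),
      (h ε)⁻¹ • (A ε).adjugate = ε • (A ε)⁻¹ := by
    have hmem : Set.Ioo (0:ℝ) ε₀ ∈ nhdsWithin (0:ℝ) (Set.Ioi 0) :=
      Ioo_mem_nhdsGT_of_mem ⟨le_refl 0, hε₀⟩
    filter_upwards [hmem] with ε hε
    obtain ⟨hε1, hε2⟩ := hε
    have hunit : IsUnit (A ε) := (hsub ε hε1 hε2).2.2
    have hdet_ne : (A ε).det ≠ 0 :=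
      isUnit_iff_ne_zero.1 ((Matrix.isUnit_iff_isUnit_det _).1 hunit)
    have hhne : h ε ≠ 0 := by
      intro h0
      rw [key ε, h0, mul_zero] at hdet_ne
      exact hdet_ne rfl
    have hinvA : (A ε)⁻¹ = ((A ε).det)⁻¹ • (A ε).adjugate := by
      rw [Matrix.inv_def, Ring.inverse_eq_inv]
    rw [hinvA, key ε, smul_smul, mul_inv]
    congr 1
    field_simp
  have part1 : Tendsto (fun ε : ℝ => ε • (A ε)⁻¹) (nhdsWithin 0 (Set.Ioi 0))
      (nhds ((1 / c) • M)) :=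
    Tendsto.congr' hev (hF.mono_left nhdsWithin_le_nhds)
  constructor
  · exact part1
  · have hGc : Continuous (fun T : Matrix (Fin n) (Fin n) ℝ =>
        dotProduct ν (T *ᵥ fun _ => (1:ℝ))) :=
      continuous_const.dotProduct (continuous_id.matrix_mulVec continuous_const)
    have hcomp := (hGc.tendsto _).comp part1
    have hM1 : M *ᵥ (fun _ => (1:ℝ)) = fun _ => (1:ℝ) := by
      funext i
      simp only [Matrix.mulVec, dotProduct, hM, Matrix.of_apply, mul_one]
      exact hpt1
    have hGval : dotProduct ν (((1 / c) • M) *ᵥ fun _ => (1:ℝ)) = 1 / c := by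
      rw [Matrix.smul_mulVec, hM1, dotProduct_smul, smul_eq_mul]
      simp only [dotProduct, mul_one]
      rw [hν1, mul_one]
    rw [hGval] at hcomp
    refine Tendsto.congr ?_ hcomp
    intro ε
    simp only [Function.comp_apply]
    rw [Matrix.smul_mulVec, dotProduct_smul, smul_eq_mul]
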